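/- arXiv:1312.2663 — 4 statements merged into one kernel-verified Lean document; each statement's English description precedes it below -/
import Mathlib

section
/- Let X be a real locally convex Hausdorff topological vector space and S₁, …, Sₙ pointed convex cones in X that are non-conflicting (−S_j ⊄ cl(S₁ + ⋯ + Sₙ) for all j). Assume each S_i has nonempty interior. Then there exists a nonzero continuous linear functional f on X such that f(x) > 0 for every x ∈ int S_i and every i = 1, …, n. -/
theorem stmt7 {X : Type*} [AddCommGroup X] [Module ℝ X] [TopologicalSpace X]
    [IsTopologicalAddGroup X] [ContinuousSMul ℝ X] [LocallyConvexSpace ℝ X] [T2Space X]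
    (n : ℕ) (hn : 0 < n) (S : Fin n → Set X)
    (hcone : ∀ j, ∀ s ∈ S j, ∀ α : ℝ, 0 ≤ α → α • s ∈ S j)
    (hconv : ∀ j, ∀ x ∈ S j, ∀ y ∈ S j, x + y ∈ S j)
    (hpointed : ∀ j, S j ∩ (-(S j)) = {0})
    (hint : ∀ j, (interior (S j)).Nonempty)
    (hnc : ∀ j, ¬ (-(S j) ⊆
      closure {x : X | ∃ y : Fin n → X, (∀ i, y i ∈ S i) ∧ x = ∑ i, y i})) :
    ∃ f : X →L[ℝ] ℝ, f ≠ 0 ∧ ∀ i, ∀ x ∈ interior (S i), 0 < f x := by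
  set C : Set X := {x : X | ∃ y : Fin n → X, (∀ i, y i ∈ S i) ∧ x = ∑ i, y i} with hC
  -- 0 belongs to each S i
  have h0 : ∀ i, (0 : X) ∈ S i := by
    intro i
    obtain ⟨x, hx⟩ := hint i
    simpa using hcone i x (interior_subset hx) 0 le_rfl
  -- each S i is contained in C
  have hsub : ∀ i, S i ⊆ C := by
    intro i s hs
    refine ⟨fun k => if k = i then s else 0, fun k => ?_, ?_⟩
    · by_cases h : k = i <;> simp [h, hs, h0 k]
    · simp [Finset.sum_ite_eq']
  -- C is convex
  have hSconv : ∀ i, Convex ℝ (S i) := by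
    intro i x hx y hy a b ha hb _
    exact hconv i _ (hcone i x hx a ha) _ (hcone i y hy b hb)
  have hCconv : Convex ℝ C := by
    rintro x ⟨y, hy, rfl⟩ x' ⟨y', hy', rfl⟩ a b ha hb hab
    refine ⟨fun k => a • y k + b • y' k, fun k => hSconv k (hy k) (hy' k) ha hb hab, ?_⟩
    simp [Finset.smul_sum, Finset.sum_add_distrib]
  -- pick a point outside the closure
  obtain ⟨z, hz, hzT⟩ := Set.not_subset.1 (hnc ⟨0, hn⟩)
  obtain ⟨f, u, hfu, hux⟩ :=
    geometric_hahn_banach_closed_point (hCconv.closure) isClosed_closure hzT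
  have h0T : (0 : X) ∈ closure C := subset_closure (hsub ⟨0, hn⟩ (h0 _))
  have hu0 : 0 < u := by simpa using hfu 0 h0T
  -- f is ≤ 0 on every S i
  have hfle : ∀ i, ∀ s ∈ S i, f s ≤ 0 := by
    intro i s hs
    by_contra h
    push_neg at h
    have hα : (0:ℝ) ≤ (u + 1) / f s := div_nonneg (by linarith) h.le
    have hmem : ((u + 1) / f s) • s ∈ closure C :=
      subset_closure (hsub i (hcone i s hs _ hα))
    have := hfu _ hmem
    rw [map_smul] at this
    rw [smul_eq_mul, div_mul_cancel₀ _ h.ne'] at this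
    linarith
  refine ⟨-f, ?_, ?_⟩
  · intro h
    have : f z = 0 := by
      have := ContinuousLinearMap.ext_iff.1 h z
      simpa [neg_eq_zero] using this
    linarith
  · intro i x hx
    have hxle : f x ≤ 0 := hfle i x (interior_subset hx)
    rcases lt_or_eq_of_le hxle with h | h
    · simpa using h
    · exfalso
      -- x + t • z for small t > 0 lies in S i, but f there is positive
      have hcont : Continuous fun t : ℝ => x + t • z :=
        continuous_const.add (continuous_id.smul continuous_const)
      have hopen : IsOpen ((fun t : ℝ => x + t • z) ⁻¹' interior (S i)) :=
        isOpen_interior.preimage hcont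
      have hmem0 : (0 : ℝ) ∈ (fun t : ℝ => x + t • z) ⁻¹' interior (S i) := by
        simpa using hx
      obtain ⟨ε, hε, hball⟩ := Metric.isOpen_iff.1 hopen 0 hmem0
      have htmem : (ε / 2 : ℝ) ∈ Metric.ball (0:ℝ) ε := by
        rw [Metric.mem_ball, Real.dist_eq, sub_zero, abs_of_pos (half_pos hε)]
        linarith
      have hxt : x + (ε / 2) • z ∈ S i := interior_subset (hball htmem)
      have hle := hfle i _ hxt
      rw [map_add, map_smul, ← h, smul_eq_mul] at hle
      have hfz : 0 < f z := by linarith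
      nlinarith [half_pos hε]
end

section
/- Let (E, ξ) = ind(Eₙ, ξₙ) be a Hausdorff locally convex inductive limit of an increasing sequence of locally convex spaces with continuous inclusions. For each n, let Sₙ be a pointed convex cone in (Eₙ, ξₙ) with nonempty ξₙ-interior, and suppose the sequence (Sₙ) is non-conflicting: for each n and each j ≤ n, −S_j ⊄ cl_{ξₙ}(S₁ + ⋯ + Sₙ). If A ⊆ E₁ is countably compact in (E₁, ξ₁), then for every n there exists a₀ ∈ A that is simultaneously weakly efficient with respect to S₁, …, Sₙ, i.e., (A − a₀) ∩ (−int_{ξᵢ} Sᵢ) = ∅ for i = 1, …, n. -/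
private lemma incl_chain_cont {E : Type*} [AddCommGroup E] [Module ℝ E]
    (p : ℕ → Submodule ℝ E) (hmono : Monotone p)
    (τ : (n : ℕ) → TopologicalSpace (p n))
    (hcont : ∀ n, @Continuous _ _ (τ n) (τ (n + 1))
      (Submodule.inclusion (hmono (Nat.le_succ n))))
    {i k : ℕ} (h : i ≤ k) :
    @Continuous _ _ (τ i) (τ k) (Submodule.inclusion (hmono h)) := by
  induction k, h using Nat.le_induction with
  | base =>
      have he : ⇑(Submodule.inclusion (hmono (le_refl i))) = (id : p i → p i) := by
        funext x; exact Subtype.ext rfl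
      rw [he]
      exact @continuous_id _ (τ i)
  | succ k hk ih =>
      have he : ⇑(Submodule.inclusion (hmono (Nat.le_succ_of_le hk))) =
          ⇑(Submodule.inclusion (hmono (Nat.le_succ k))) ∘
            ⇑(Submodule.inclusion (hmono hk)) := by
        funext x; exact Subtype.ext rfl
      rw [he]
      exact @Continuous.comp _ _ _ (τ i) (τ k) (τ (k + 1)) _ _ (hcont k) ih

/-- Existence of simultaneously weakly efficient points with respect to finitely many
steps in an inductive limit of partially ordered locally convex spaces. -/
theorem stmt10 {E : Type*} [AddCommGroup E] [Module ℝ E]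
    (p : ℕ → Submodule ℝ E) (hmono : Monotone p)
    (hproper : ∀ n, p n ≠ p (n + 1))
    (τ : (n : ℕ) → TopologicalSpace (p n))
    (htag : ∀ n, @IsTopologicalAddGroup (p n) (τ n) _)
    (hsmul : ∀ n, @ContinuousSMul ℝ (p n) _ _ (τ n))
    (hlc : ∀ n, @LocallyConvexSpace ℝ (p n) _ _ _ _ (τ n))
    (ht2 : ∀ n, @T2Space (p n) (τ n))
    (hcont : ∀ n, @Continuous _ _ (τ n) (τ (n + 1))
      (Submodule.inclusion (hmono (Nat.le_succ n))))
    (S : (n : ℕ) → Set (p n))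
    (hcone : ∀ n, ∀ s ∈ S n, ∀ α : ℝ, 0 ≤ α → α • s ∈ S n)
    (hconv : ∀ n, ∀ x ∈ S n, ∀ y ∈ S n, x + y ∈ S n)
    (hpointed : ∀ n, S n ∩ (-(S n)) = {0})
    (hint : ∀ n, (@interior _ (τ n) (S n)).Nonempty)
    (hnc : ∀ n, ∀ j, ∀ hj : j ≤ n,
      ¬ (-(Submodule.inclusion (hmono hj) '' S j) ⊆
        @closure _ (τ n) {x : p n | ∃ y : ℕ → p n,
          (∀ i, ∀ hi : i ≤ n, y i ∈ Submodule.inclusion (hmono hi) '' S i) ∧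
          x = ∑ i ∈ Finset.range (n + 1), y i}))
    (A : Set (p 0)) (hAne : A.Nonempty)
    (hcc : ∀ u : ℕ → p 0, (∀ k, u k ∈ A) →
      ∃ a ∈ A, @MapClusterPt _ (τ 0) _ a Filter.atTop u) :
    ∀ n, ∃ a₀ ∈ A, ∀ i, i ≤ n → ∀ a ∈ A,
      Submodule.inclusion (hmono (Nat.zero_le i)) a
        - Submodule.inclusion (hmono (Nat.zero_le i)) a₀
          ∉ -(@interior _ (τ i) (S i)) := by
  intro n
  classical
  letI tn : TopologicalSpace (p n) := τ n
  haveI := htag n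
  haveI := hsmul n
  haveI := hlc n
  letI t0 : TopologicalSpace (p 0) := τ 0
  set C : Set (p n) := {x : p n | ∃ y : ℕ → p n,
      (∀ i, ∀ hi : i ≤ n, y i ∈ Submodule.inclusion (hmono hi) '' S i) ∧
      x = ∑ i ∈ Finset.range (n + 1), y i} with hC
  -- 0 ∈ S i for every i
  have h0S : ∀ i, (0 : p i) ∈ S i := by
    intro i
    obtain ⟨x, hx⟩ := hint i
    simpa using hcone i x (interior_subset hx) 0 le_rfl
  -- images of the cones are inside C
  have hmemC : ∀ i (hi : i ≤ n), ∀ s ∈ S i, Submodule.inclusion (hmono hi) s ∈ C := by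
    intro i hi s hs
    refine ⟨fun j => if j = i then Submodule.inclusion (hmono hi) s else 0, ?_, ?_⟩
    · intro j hj
      by_cases h : j = i
      · subst h; simp only [if_pos rfl]; exact ⟨s, hs, rfl⟩
      · simp only [if_neg h]; exact ⟨0, h0S j, map_zero _⟩
    · rw [Finset.sum_ite_eq' (Finset.range (n + 1)) i]
      simp [Nat.lt_succ_of_le hi]
  have h0C : (0 : p n) ∈ C := by
    simpa using hmemC 0 (Nat.zero_le n) 0 (h0S 0)
  -- convexity of the cones and of C
  have hSconv : ∀ i, Convex ℝ (S i) := by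
    intro i x hx y hy a b ha hb _
    exact hconv i _ (hcone i x hx a ha) _ (hcone i y hy b hb)
  have hCconv : Convex ℝ C := by
    rintro x ⟨y, hy, rfl⟩ x' ⟨y', hy', rfl⟩ a b ha hb hab
    refine ⟨fun j => a • y j + b • y' j, ?_, ?_⟩
    · intro j hj
      obtain ⟨u, hu, hju⟩ := hy j hj
      obtain ⟨u', hu', hju'⟩ := hy' j hj
      exact ⟨a • u + b • u', hSconv j hu hu' ha hb hab,
        by rw [map_add, map_smul, map_smul, hju, hju']⟩
    · rw [Finset.smul_sum, Finset.smul_sum, ← Finset.sum_add_distrib]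
  -- pick a point of -S₀ outside the closure of C
  obtain ⟨z, hz1, hz2⟩ := Set.not_subset.mp (hnc n 0 (Nat.zero_le n))
  rw [← hC] at hz2
  rw [Set.mem_neg] at hz1
  obtain ⟨s₀, hs₀, hzs⟩ := hz1
  -- separate
  obtain ⟨f, u, hfu, hub⟩ :=
    geometric_hahn_banach_point_closed hCconv.closure isClosed_closure hz2
  have hu0 : u < 0 := by simpa using hub 0 (subset_closure h0C)
  -- f is nonnegative on the images of the cones
  have hfge : ∀ i (hi : i ≤ n), ∀ s ∈ S i,
      0 ≤ f (Submodule.inclusion (hmono hi) s) := by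
    intro i hi s hs
    by_contra hneg
    push_neg at hneg
    have htq : (0 : ℝ) < u / f (Submodule.inclusion (hmono hi) s) :=
      div_pos_of_neg_of_neg hu0 hneg
    have hmm := hub _ (subset_closure
      (hmemC i hi _ (hcone i s hs _ htq.le)))
    rw [map_smul, map_smul, smul_eq_mul, div_mul_cancel₀ _ (ne_of_lt hneg)] at hmm
    exact lt_irrefl u hmm
  -- f is positive at the image of s₀
  have hv₀ : 0 < f (Submodule.inclusion (hmono (Nat.zero_le n)) s₀) := by
    have h1 : f (Submodule.inclusion (hmono (Nat.zero_le n)) s₀) = -f z := by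
      rw [hzs, map_neg]
    rw [h1]
    linarith
  -- f is positive on the interiors of the cones
  have hfpos : ∀ i (hi : i ≤ n), ∀ x ∈ @interior _ (τ i) (S i),
      0 < f (Submodule.inclusion (hmono hi) x) := by
    intro i hi x hx
    letI ti : TopologicalSpace (p i) := τ i
    haveI := htag i
    haveI := hsmul i
    set s' : p i := Submodule.inclusion (hmono (Nat.zero_le i)) s₀ with hs'
    have hgc : Continuous fun t : ℝ => x - t • s' :=
      continuous_const.sub (continuous_id.smul continuous_const)
    have h0m : (fun t : ℝ => x - t • s') 0 ∈ interior (S i) := by simpa using hx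
    have hev : ∀ᶠ t in nhds (0 : ℝ), x - t • s' ∈ interior (S i) :=
      hgc.continuousAt.eventually_mem (isOpen_interior.mem_nhds h0m)
    have hev' : ∀ᶠ t in nhdsWithin (0 : ℝ) (Set.Ioi 0), x - t • s' ∈ interior (S i) :=
      hev.filter_mono nhdsWithin_le_nhds
    obtain ⟨t, htmem, htpos⟩ := (hev'.and self_mem_nhdsWithin).exists
    have hmem : x - t • s' ∈ S i := interior_subset htmem
    have h1 : 0 ≤ f (Submodule.inclusion (hmono hi) (x - t • s')) := hfge i hi _ hmem
    have hcomp : Submodule.inclusion (hmono hi) s' =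
        Submodule.inclusion (hmono (Nat.zero_le n)) s₀ := Subtype.ext rfl
    rw [map_sub, map_smul, hcomp, map_sub, map_smul, smul_eq_mul] at h1
    have hmul : 0 < t * f (Submodule.inclusion (hmono (Nat.zero_le n)) s₀) :=
      mul_pos htpos hv₀
    linarith
  -- the scalarized functional on p 0
  set φ : p 0 → ℝ := fun a => f (Submodule.inclusion (hmono (Nat.zero_le n)) a) with hφ
  have hφcont : Continuous φ :=
    f.continuous.comp (incl_chain_cont p hmono τ hcont (Nat.zero_le n))
  -- φ is bounded below on A
  have hbdd : BddBelow (φ '' A) := by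
    by_contra hb
    have hex : ∀ k : ℕ, ∃ a, a ∈ A ∧ φ a < -(k : ℝ) := by
      intro k
      by_contra h
      push_neg at h
      exact hb ⟨-(k : ℝ), by rintro r ⟨a, ha, rfl⟩; exact h a ha⟩
    choose w hwA hwlt using hex
    obtain ⟨a, haA, hacp⟩ := hcc w hwA
    have h2 : MapClusterPt (φ a) Filter.atTop (φ ∘ w) :=
      hacp.continuousAt_comp hφcont.continuousAt
    have h3 : Filter.Tendsto (φ ∘ w) Filter.atTop Filter.atBot := by
      apply Filter.tendsto_atBot_mono (fun k => (hwlt k).le)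
      exact Filter.tendsto_neg_atTop_atBot.comp tendsto_natCast_atTop_atTop
    have h4 : ClusterPt (φ a) Filter.atBot := h2.clusterPt.mono h3
    have h5 : nhds (φ a) ⊓ Filter.atBot = ⊥ := inf_nhds_atBot (φ a)
    exact h4.ne h5
  have hAne' : (φ '' A).Nonempty := hAne.image φ
  set m := sInf (φ '' A) with hm
  -- a minimizing sequence
  have hex : ∀ k : ℕ, ∃ a, a ∈ A ∧ φ a < m + 1 / ((k : ℝ) + 1) := by
    intro k
    have hlt : m < m + 1 / ((k : ℝ) + 1) := by
      have : (0 : ℝ) < 1 / ((k : ℝ) + 1) := by positivity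
      linarith
    obtain ⟨r, ⟨a, ha, rfl⟩, hrlt⟩ := exists_lt_of_csInf_lt hAne' hlt
    exact ⟨a, ha, hrlt⟩
  choose w hwA hwlt using hex
  have hwge : ∀ k, m ≤ φ (w k) := fun k => csInf_le hbdd ⟨w k, hwA k, rfl⟩
  have htend : Filter.Tendsto (φ ∘ w) Filter.atTop (nhds m) := by
    apply tendsto_of_tendsto_of_tendsto_of_le_of_le tendsto_const_nhds ?_ hwge
      (fun k => (hwlt k).le)
    have := tendsto_one_div_add_atTop_nhds_zero_nat (𝕜 := ℝ)
    simpa using tendsto_const_nhds.add this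
  obtain ⟨a₀, ha₀A, hcp⟩ := hcc w hwA
  have h2 : MapClusterPt (φ a₀) Filter.atTop (φ ∘ w) :=
    hcp.continuousAt_comp hφcont.continuousAt
  have hφa : φ a₀ = m := by
    haveI : (Filter.map (φ ∘ w) Filter.atTop).NeBot := Filter.map_neBot
    exact eq_of_nhds_neBot (h2.clusterPt.mono htend)
  have hmin : ∀ a ∈ A, φ a₀ ≤ φ a := by
    intro a ha
    rw [hφa]
    exact csInf_le hbdd ⟨a, ha, rfl⟩
  -- conclusion
  refine ⟨a₀, ha₀A, ?_⟩
  intro i hi a ha hbad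
  rw [Set.mem_neg, neg_sub] at hbad
  have hpos := hfpos i hi _ hbad
  have hcomp2 : Submodule.inclusion (hmono hi)
      (Submodule.inclusion (hmono (Nat.zero_le i)) a₀
        - Submodule.inclusion (hmono (Nat.zero_le i)) a) =
      Submodule.inclusion (hmono (Nat.zero_le n)) a₀
        - Submodule.inclusion (hmono (Nat.zero_le n)) a := Subtype.ext (by simp)
  rw [hcomp2, map_sub] at hpos
  have hle := hmin a ha
  simp only [hφ] at hle
  linarith
end

section
/- Let X be a real locally convex Hausdorff topological vector space and W₁, …, Wₙ convex cones in X, each with nonempty interior, that are non-conflicting: −W_j ⊄ cl(W₁ + ⋯ + Wₙ) for each j. Set W'_j = int W_j ∪ {0}. Then W'₁, …, W'ₙ are also non-conflicting: −W'_j ⊄ cl(W'₁ + ⋯ + W'ₙ) for each j. -/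
theorem stmt14 {X : Type*} [AddCommGroup X] [Module ℝ X] [TopologicalSpace X]
    [IsTopologicalAddGroup X] [ContinuousSMul ℝ X] [LocallyConvexSpace ℝ X] [T2Space X]
    (n : ℕ) (W : Fin n → Set X)
    (hcone : ∀ j, ∀ s ∈ W j, ∀ α : ℝ, 0 ≤ α → α • s ∈ W j)
    (hconv : ∀ j, ∀ x ∈ W j, ∀ y ∈ W j, x + y ∈ W j)
    (hint : ∀ j, (interior (W j)).Nonempty)
    (hnc : ∀ j, ¬ (-(W j) ⊆
      closure {x : X | ∃ y : Fin n → X, (∀ i, y i ∈ W i) ∧ x = ∑ i, y i})) :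
    ∀ j, ¬ (-(interior (W j) ∪ {0}) ⊆
      closure {x : X | ∃ y : Fin n → X, (∀ i, y i ∈ interior (W i) ∪ {0}) ∧ x = ∑ i, y i}) := by
  intro j h
  apply hnc j
  -- 0 ∈ W i for each i
  have hzero : ∀ i, (0 : X) ∈ W i := by
    intro i
    obtain ⟨x, hx⟩ := (hint i)
    have hxW : x ∈ W i := interior_subset hx
    simpa using hcone i x hxW 0 le_rfl
  -- the primed sum set sits inside the original sum set
  have hsub : {x : X | ∃ y : Fin n → X, (∀ i, y i ∈ interior (W i) ∪ {0}) ∧ x = ∑ i, y i} ⊆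
      {x : X | ∃ y : Fin n → X, (∀ i, y i ∈ W i) ∧ x = ∑ i, y i} := by
    rintro x ⟨y, hy, rfl⟩
    refine ⟨y, fun i => ?_, rfl⟩
    rcases hy i with h' | h'
    · exact interior_subset h'
    · simp only [Set.mem_singleton_iff] at h'
      rw [h']; exact hzero i
  -- W j is convex
  have hconvex : Convex ℝ (W j) := by
    intro x hx y hy a b ha hb _
    exact hconv j _ (hcone j x hx a ha) _ (hcone j y hy b hb)
  -- W j ⊆ closure (interior (W j))
  obtain ⟨y, hy⟩ := hint j
  have hdense : W j ⊆ closure (interior (W j)) := by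
    intro x hx
    have htend : Filter.Tendsto (fun t : ℝ => x + t • (y - x)) (nhdsWithin 0 (Set.Ioi 0))
        (nhds x) := by
      have : Filter.Tendsto (fun t : ℝ => x + t • (y - x)) (nhds 0) (nhds x) := by
        have h0 : Filter.Tendsto (fun t : ℝ => t • (y - x)) (nhds 0) (nhds 0) := by
          have := ((continuous_id.smul (continuous_const : Continuous fun _ : ℝ => y - x))).tendsto
            (0 : ℝ)
          have h' : Filter.Tendsto (fun t : ℝ => t • (y - x)) (nhds 0) (nhds ((0:ℝ) • (y - x))) := this
          rwa [zero_smul] at h'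
        simpa using h0.const_add x
      exact this.mono_left nhdsWithin_le_nhds
    have hev : ∀ᶠ t in nhdsWithin (0 : ℝ) (Set.Ioi 0),
        x + t • (y - x) ∈ interior (W j) := by
      have hIoc : Set.Ioc (0 : ℝ) 1 ∈ nhdsWithin (0 : ℝ) (Set.Ioi 0) := by
        have := Filter.inter_mem (nhdsWithin_le_nhds (Iic_mem_nhds (one_pos : (0:ℝ) < 1)))
          (self_mem_nhdsWithin (a := (0:ℝ)) (s := Set.Ioi 0))
        refine Filter.mem_of_superset this ?_
        rintro t ⟨ht1, ht0⟩; exact ⟨ht0, ht1⟩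
      exact Filter.eventually_of_mem hIoc fun t ht =>
        hconvex.add_smul_sub_mem_interior hx hy ht
    exact mem_closure_of_tendsto htend hev
  -- conclude
  intro x hx
  rw [Set.mem_neg] at hx
  have hx' : -x ∈ closure (interior (W j)) := hdense hx
  have hmem : x ∈ closure (-(interior (W j))) := by
    rw [← neg_closure, Set.mem_neg]
    simpa using hx'
  have h1 : -(interior (W j)) ⊆
      closure {x : X | ∃ y : Fin n → X, (∀ i, y i ∈ interior (W i) ∪ {0}) ∧ x = ∑ i, y i} := by
    intro z hz
    refine h ?_
    rw [Set.mem_neg] at hz ⊢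
    exact Set.mem_union_left _ hz
  have h2 := closure_mono h1 hmem
  rw [closure_closure] at h2
  exact closure_mono hsub h2
end

section
/- Let (E, ξ) = ind(Eₙ, ξₙ) be a Hausdorff locally convex inductive limit of an increasing sequence of locally convex spaces with continuous inclusions. For each n, let Sₙ be a pointed convex cone in (Eₙ, ξₙ) and Wₙ a convex cone in (Eₙ, ξₙ) with Sₙ \ {0} ⊆ int_{ξₙ} Wₙ (a dilating cone of Sₙ). Assume (Wₙ)_{n∈ℕ} is non-conflicting: for each n and j ≤ n, −W_j ⊄ cl_{ξₙ}(W₁ + ⋯ + Wₙ). If A ⊆ E₁ is countably compact in (E₁, ξ₁), then there exists a₀ ∈ A such that for every n there is a convex cone W with Sₙ \ {0} ⊆ int_{ξₙ} W and (A − a₀) ∩ (−W) = {0}; i.e., ⋂_{n=1}^∞ GHeₙ(A, Sₙ) ≠ ∅. -/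
open Filter Set

/-- Separation: a point outside the closure of a convex cone can be separated by a
continuous linear functional that is nonnegative on the cone and negative at the point. -/
theorem div_nonneg_of_nonpos_of_nonpos' {a b : ℝ} (ha : a ≤ 0) (hb : b ≤ 0) : 0 ≤ a / b := by
  rcases eq_or_lt_of_le hb with rfl | hb
  · simp
  rcases eq_or_lt_of_le ha with rfl | ha
  · simp
  exact (div_pos_of_neg_of_neg ha hb).le

theorem aux_sep {E : Type*} [AddCommGroup E] [Module ℝ E] [TopologicalSpace E]
    [IsTopologicalAddGroup E] [ContinuousSMul ℝ E] [LocallyConvexSpace ℝ E]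
    (T : Set E) (hTadd : ∀ x ∈ T, ∀ y ∈ T, x + y ∈ T)
    (hTsmul : ∀ x ∈ T, ∀ α : ℝ, 0 ≤ α → α • x ∈ T) (hT0 : (0:E) ∈ T)
    (z : E) (hz : z ∉ closure T) :
    ∃ f : E → ℝ, IsLinearMap ℝ f ∧ Continuous f ∧ (∀ x ∈ T, 0 ≤ f x) ∧ f z < 0 := by
  have hconv : Convex ℝ T := by
    intro x hx y hy a b ha hb hab
    exact hTadd _ (hTsmul x hx a ha) _ (hTsmul y hy b hb)
  obtain ⟨f, u, hfz, hfT⟩ :=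
    geometric_hahn_banach_point_closed hconv.closure isClosed_closure hz
  have hu0 : u < 0 := by simpa using hfT 0 (subset_closure hT0)
  refine ⟨f, f.toLinearMap.isLinear, f.continuous, ?_, hfz.trans hu0⟩
  intro x hx
  by_contra hneg
  push_neg at hneg
  have hα : (0:ℝ) ≤ (u - 1) / f x := by
    apply div_nonneg_of_nonpos_of_nonpos'
    · linarith
    · linarith
  have := hfT _ (subset_closure (hTsmul x hx _ hα))
  rw [map_smul, smul_eq_mul, div_mul_cancel₀ _ (ne_of_lt hneg)] at this
  linarith

/-- A linear functional nonnegative on a set and positive somewhere on it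
is positive on the interior. -/
theorem aux_pos {E : Type*} [AddCommGroup E] [Module ℝ E] [TopologicalSpace E]
    [IsTopologicalAddGroup E] [ContinuousSMul ℝ E]
    (f : E → ℝ) (hf : IsLinearMap ℝ f) (W : Set E)
    (hfW : ∀ x ∈ W, 0 ≤ f x) (hne : ∃ w ∈ W, 0 < f w)
    (u : E) (hu : u ∈ interior W) : 0 < f u := by
  obtain ⟨w, hwW, hw⟩ := hne
  rcases lt_or_ge 0 (f u) with h | h
  · exact h
  have hu0 : f u = 0 := le_antisymm h (hfW u (interior_subset hu))
  exfalso
  have hc : Continuous fun t : ℝ => u + t • (-w) := by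
    continuity
  have hopen : IsOpen ((fun t : ℝ => u + t • (-w)) ⁻¹' interior W) :=
    isOpen_interior.preimage hc
  have h0 : (0:ℝ) ∈ (fun t : ℝ => u + t • (-w)) ⁻¹' interior W := by
    simp [hu]
  obtain ⟨ε, hε, hball⟩ := Metric.isOpen_iff.1 hopen 0 h0
  have hmem : (ε/2 : ℝ) ∈ Metric.ball (0:ℝ) ε := by
    rw [Metric.mem_ball, Real.dist_eq, sub_zero, abs_of_pos (half_pos hε)]
    exact half_lt_self hε
  have := hfW _ (interior_subset (hball hmem))
  rw [hf.map_add, hf.map_smul, hu0] at this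
  simp only [hf.map_neg, smul_eq_mul] at this
  nlinarith

/-- Attainment of the minimum of a continuous function on a countably compact set. -/
theorem aux_min {X : Type*} [TopologicalSpace X] (A : Set X) (hA : A.Nonempty)
    (hcc : ∀ u : ℕ → X, (∀ k, u k ∈ A) → ∃ a ∈ A, MapClusterPt a Filter.atTop u)
    (g : X → ℝ) (hg : Continuous g) : ∃ a ∈ A, ∀ b ∈ A, g a ≤ g b := by
  have hbdd : BddBelow (g '' A) := by
    by_contra hb
    have hex : ∀ k : ℕ, ∃ x ∈ A, g x < -(k:ℝ) := by
      intro k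
      rw [not_bddBelow_iff] at hb
      obtain ⟨y, ⟨x, hxA, rfl⟩, hy⟩ := hb (-(k:ℝ))
      exact ⟨x, hxA, hy⟩
    choose u huA hu using hex
    obtain ⟨a, haA, hcl⟩ := hcc u huA
    have hgc : MapClusterPt (g a) atTop (g ∘ u) := hcl.continuousAt_comp hg.continuousAt
    have hfreq := (mapClusterPt_iff_frequently.1 hgc) (Metric.ball (g a) 1) (Metric.ball_mem_nhds _ one_pos)
    have hev : ∀ᶠ k in (atTop : Filter ℕ), ¬ (g ∘ u) k ∈ Metric.ball (g a) 1 := by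
      filter_upwards [eventually_ge_atTop (Nat.ceil (|g a| + 1))] with k hk
      have h1 : g (u k) < -(k:ℝ) := hu k
      have h2 : (|g a| + 1 : ℝ) ≤ (k:ℝ) := (Nat.ceil_le.1 (le_refl _)).trans (by exact_mod_cast hk)
      simp only [Function.comp, Metric.mem_ball, Real.dist_eq]
      have : g (u k) - g a < -1 := by
        have := abs_le.1 (le_refl |g a|)
        nlinarith [neg_abs_le (g a), le_abs_self (g a)]
      rw [abs_sub_comm]
      rw [not_lt]
      calc (1:ℝ) ≤ g a - g (u k) := by linarith
        _ ≤ |g a - g (u k)| := le_abs_self _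
    exact (hev.and_frequently hfreq).exists.elim (fun k hk => hk.1 hk.2)
  set m := sInf (g '' A) with hm
  have hne : (g '' A).Nonempty := hA.image g
  have hex : ∀ k : ℕ, ∃ x ∈ A, g x < m + 1/((k:ℝ)+1) := by
    intro k
    have hlt : m < m + 1/((k:ℝ)+1) := by
      have : (0:ℝ) < 1/((k:ℝ)+1) := by positivity
      linarith
    obtain ⟨y, ⟨x, hxA, rfl⟩, hy⟩ := exists_lt_of_csInf_lt hne hlt
    exact ⟨x, hxA, hy⟩
  choose u huA hu using hex
  obtain ⟨a, haA, hcl⟩ := hcc u huA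
  refine ⟨a, haA, fun b hb => ?_⟩
  have hmb : m ≤ g b := csInf_le hbdd ⟨b, hb, rfl⟩
  by_contra hgab
  push_neg at hgab
  have hma : m ≤ g a := csInf_le hbdd ⟨a, haA, rfl⟩
  have hgam : m < g a := lt_of_le_of_lt hmb hgab
  set ε := (g a - m)/2 with hε
  have hεpos : 0 < ε := by simp [hε]; linarith
  have hgc : MapClusterPt (g a) atTop (g ∘ u) := hcl.continuousAt_comp hg.continuousAt
  have hfreq := (mapClusterPt_iff_frequently.1 hgc) (Metric.ball (g a) ε) (Metric.ball_mem_nhds _ hεpos)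
  have hev : ∀ᶠ k in (atTop : Filter ℕ), g (u k) < m + ε := by
    filter_upwards [eventually_ge_atTop (Nat.ceil (1/ε))] with k hk
    have h1 : g (u k) < m + 1/((k:ℝ)+1) := hu k
    have h2 : (1/ε : ℝ) ≤ (k:ℝ) := (Nat.ceil_le.1 (le_refl _)).trans (by exact_mod_cast hk)
    have h3 : 1/((k:ℝ)+1) ≤ ε := by
      rw [div_le_iff₀ (by positivity)]
      rw [div_le_iff₀ hεpos] at h2
      nlinarith
    linarith
  obtain ⟨k, hk1, hk2⟩ := (hev.and_frequently hfreq).exists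
  simp only [Function.comp, Metric.mem_ball, Real.dist_eq] at hk2
  have := abs_lt.1 hk2
  simp [hε] at hk1 this
  linarith [this.1, this.2]

/-- The pointed cone generated by the interior of a convex cone. -/
theorem aux_cone {E : Type*} [AddCommGroup E] [Module ℝ E] [TopologicalSpace E]
    [IsTopologicalAddGroup E] [ContinuousSMul ℝ E]
    (W : Set E) (hWsmul : ∀ s ∈ W, ∀ α : ℝ, 0 ≤ α → α • s ∈ W)
    (hWadd : ∀ x ∈ W, ∀ y ∈ W, x + y ∈ W) :
    (∀ s ∈ interior W ∪ {0}, ∀ α : ℝ, 0 ≤ α → α • s ∈ interior W ∪ {0}) ∧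
    (∀ x ∈ interior W ∪ {0}, ∀ y ∈ interior W ∪ {0}, x + y ∈ interior W ∪ {0}) := by
  constructor
  · rintro s (hs | hs) α hα
    · rcases eq_or_lt_of_le hα with rfl | hαpos
      · right; simp
      · left
        have hmap : IsOpenMap (fun x : E => α • x) := isOpenMap_smul₀ (ne_of_gt hαpos)
        have hsub : (fun x : E => α • x) '' interior W ⊆ interior W := by
          apply interior_maximal ?_ (hmap _ isOpen_interior)
          rintro _ ⟨z, hz, rfl⟩
          exact hWsmul z (interior_subset hz) α hα
        exact hsub ⟨s, hs, rfl⟩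
    · right; rw [Set.mem_singleton_iff] at hs; subst hs; simp
  · rintro x (hx | hx) y (hy | hy)
    · left
      have hmap : IsOpenMap (fun z : E => z + y) := isOpenMap_add_right y
      have hsub : (fun z : E => z + y) '' interior W ⊆ interior W := by
        apply interior_maximal ?_ (hmap _ isOpen_interior)
        rintro _ ⟨z, hz, rfl⟩
        exact hWadd z (interior_subset hz) y (interior_subset hy)
      exact hsub ⟨x, hx, rfl⟩
    · rw [Set.mem_singleton_iff] at hy; subst hy; rw [add_zero]; exact Or.inl hx
    · rw [Set.mem_singleton_iff] at hx; subst hx; rw [zero_add]; exact Or.inl hy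
    · rw [Set.mem_singleton_iff] at hx hy; subst hx; subst hy; right; simp

/-- Existence of lastingly globally properly efficient points in an inductive limit
of partially ordered locally convex spaces. -/
theorem stmt17 {E : Type*} [AddCommGroup E] [Module ℝ E]
    (p : ℕ → Submodule ℝ E) (hmono : Monotone p)
    (hproper : ∀ n, p n ≠ p (n + 1))
    (τ : (n : ℕ) → TopologicalSpace (p n))
    (htag : ∀ n, @IsTopologicalAddGroup (p n) (τ n) _)
    (hsmul : ∀ n, @ContinuousSMul ℝ (p n) _ _ (τ n))
    (hlc : ∀ n, @LocallyConvexSpace ℝ (p n) _ _ _ _ (τ n))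
    (ht2 : ∀ n, @T2Space (p n) (τ n))
    (hcont : ∀ n, @Continuous _ _ (τ n) (τ (n + 1))
      (Submodule.inclusion (hmono (Nat.le_succ n))))
    (S : (n : ℕ) → Set (p n))
    (hScone : ∀ n, ∀ s ∈ S n, ∀ α : ℝ, 0 ≤ α → α • s ∈ S n)
    (hSconv : ∀ n, ∀ x ∈ S n, ∀ y ∈ S n, x + y ∈ S n)
    (hSpointed : ∀ n, S n ∩ (-(S n)) = {0})
    (W : (n : ℕ) → Set (p n))
    (hWcone : ∀ n, ∀ s ∈ W n, ∀ α : ℝ, 0 ≤ α → α • s ∈ W n)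
    (hWconv : ∀ n, ∀ x ∈ W n, ∀ y ∈ W n, x + y ∈ W n)
    (hdil : ∀ n, S n \ {0} ⊆ @interior _ (τ n) (W n))
    (hnc : ∀ n, ∀ j, ∀ hj : j ≤ n,
      ¬ (-(Submodule.inclusion (hmono hj) '' W j) ⊆
        @closure _ (τ n) {x : p n | ∃ y : ℕ → p n,
          (∀ i, ∀ hi : i ≤ n, y i ∈ Submodule.inclusion (hmono hi) '' W i) ∧
          x = ∑ i ∈ Finset.range (n + 1), y i}))
    (A : Set (p 0)) (hAne : A.Nonempty)
    (hcc : ∀ u : ℕ → p 0, (∀ k, u k ∈ A) →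
      ∃ a ∈ A, @MapClusterPt _ (τ 0) _ a Filter.atTop u) :
    ∃ a₀ ∈ A, ∀ n, ∃ W₀ : Set (p n),
      (∀ s ∈ W₀, ∀ α : ℝ, 0 ≤ α → α • s ∈ W₀) ∧
      (∀ x ∈ W₀, ∀ y ∈ W₀, x + y ∈ W₀) ∧
      S n \ {0} ⊆ @interior _ (τ n) W₀ ∧
      ((fun a => Submodule.inclusion (hmono (Nat.zero_le n)) a
          - Submodule.inclusion (hmono (Nat.zero_le n)) a₀) '' A) ∩ (-W₀) = {0} := by
  classical
  -- continuity of the inclusions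
  have contE : ∀ n j (h : j ≤ n),
      @Continuous _ _ (τ j) (τ n) (Submodule.inclusion (hmono h)) := by
    intro n
    induction n with
    | zero =>
      intro j h
      obtain rfl : j = 0 := Nat.le_zero.mp h
      have hid : (Submodule.inclusion (hmono h) : p 0 → p 0) = id := by
        funext x; rfl
      rw [hid]
      exact @continuous_id _ (τ 0)
    | succ n ih =>
      intro j h
      by_cases hj : j ≤ n
      · have hcomp : (Submodule.inclusion (hmono h) : p j → p (n+1)) =
            (fun x => Submodule.inclusion (hmono (Nat.le_succ n))
              (Submodule.inclusion (hmono hj) x)) := by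
          funext x; rfl
        rw [hcomp]
        exact @Continuous.comp _ _ _ (τ j) (τ n) (τ (n+1)) _ _ (hcont n) (ih j hj)
      · obtain rfl : j = n + 1 := le_antisymm h (by omega)
        have hid : (Submodule.inclusion (hmono h) : p (n+1) → p (n+1)) = id := by
          funext x; rfl
        rw [hid]
        exact @continuous_id _ (τ (n+1))
  set T : (n : ℕ) → Set (p n) := fun n => {x : p n | ∃ y : ℕ → p n,
      (∀ i, ∀ hi : i ≤ n, y i ∈ Submodule.inclusion (hmono hi) '' W i) ∧
      x = ∑ i ∈ Finset.range (n + 1), y i} with hTdef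
  -- 0 belongs to each W i
  have hW0 : ∀ i, (0 : p i) ∈ W i := by
    intro i
    have h := hnc i i (le_refl i)
    rw [Set.not_subset] at h
    obtain ⟨x, hx, -⟩ := h
    rw [Set.mem_neg] at hx
    obtain ⟨w, hw, -⟩ := hx
    have := hWcone i w hw 0 le_rfl
    simpa using this
  have hT0 : ∀ n, (0 : p n) ∈ T n := by
    intro n
    refine ⟨fun _ => 0, fun i hi => ⟨0, hW0 i, map_zero _⟩, by simp⟩
  have hWT : ∀ n j (hj : j ≤ n), ∀ w ∈ W j,
      Submodule.inclusion (hmono hj) w ∈ T n := by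
    intro n j hj w hw
    refine ⟨fun i => if i = j then Submodule.inclusion (hmono hj) w else 0, ?_, ?_⟩
    · intro i hi
      by_cases hij : i = j
      · subst hij
        exact ⟨w, hw, by simp⟩
      · exact ⟨0, hW0 i, by simp [hij]⟩
    · rw [Finset.sum_ite_eq' (Finset.range (n+1)) j
        (fun _ => Submodule.inclusion (hmono hj) w),
        if_pos (Finset.mem_range.mpr (Nat.lt_succ_of_le hj))]
  have hTadd : ∀ n, ∀ x ∈ T n, ∀ y ∈ T n, x + y ∈ T n := by
    intro n x hx y hy
    obtain ⟨u, hu, rfl⟩ := hx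
    obtain ⟨v, hv, rfl⟩ := hy
    refine ⟨fun i => u i + v i, ?_, ?_⟩
    · intro i hi
      obtain ⟨a, ha, hae⟩ := hu i hi
      obtain ⟨b, hb, hbe⟩ := hv i hi
      exact ⟨a + b, hWconv i a ha b hb, by rw [map_add, hae, hbe]⟩
    · rw [Finset.sum_add_distrib]
  have hTsmul : ∀ n, ∀ x ∈ T n, ∀ α : ℝ, 0 ≤ α → α • x ∈ T n := by
    intro n x hx α hα
    obtain ⟨u, hu, rfl⟩ := hx
    refine ⟨fun i => α • u i, ?_, ?_⟩
    · intro i hi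
      obtain ⟨a, ha, hae⟩ := hu i hi
      exact ⟨α • a, hWcone i a ha α hα, by rw [map_smul, hae]⟩
    · rw [Finset.smul_sum]
  -- separating functionals
  have key : ∀ n j (hj : j ≤ n), ∃ f : p n → ℝ, IsLinearMap ℝ f ∧
      @Continuous _ _ (τ n) _ f ∧ (∀ x ∈ T n, 0 ≤ f x) ∧
      ∃ w ∈ W j, 0 < f (Submodule.inclusion (hmono hj) w) := by
    intro n j hj
    have h := hnc n j hj
    rw [Set.not_subset] at h
    obtain ⟨x, hx, hxcl⟩ := h
    rw [Set.mem_neg] at hx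
    obtain ⟨w, hwW, hwx⟩ := hx
    letI := τ n
    haveI := htag n
    haveI := hsmul n
    haveI := hlc n
    obtain ⟨f, hflin, hfcont, hfpos, hfneg⟩ :=
      aux_sep (T n) (hTadd n) (hTsmul n) (hT0 n) x hxcl
    refine ⟨f, hflin, hfcont, hfpos, w, hwW, ?_⟩
    have hx' : f (Submodule.inclusion (hmono hj) w) = - f x := by
      rw [hwx, hflin.map_neg]
    rw [hx']
    linarith
  choose ff hflin hfcont hfpos hfw using key
  -- the combined functionals
  set F : (n : ℕ) → p n → ℝ := fun n x =>
    ∑ j ∈ Finset.range (n+1), (if hj : j ≤ n then ff n j hj x else 0) with hFdef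
  have FLin : ∀ n, IsLinearMap ℝ (F n) := by
    intro n
    constructor
    · intro x y
      rw [hFdef]
      simp only
      rw [← Finset.sum_add_distrib]
      refine Finset.sum_congr rfl fun j hjm => ?_
      by_cases hj : j ≤ n
      · rw [dif_pos hj, dif_pos hj, dif_pos hj, (hflin n j hj).map_add]
      · rw [dif_neg hj, dif_neg hj, dif_neg hj, add_zero]
    · intro c x
      rw [hFdef]
      simp only [smul_eq_mul]
      rw [Finset.mul_sum]
      refine Finset.sum_congr rfl fun j hjm => ?_
      by_cases hj : j ≤ n
      · rw [dif_pos hj, dif_pos hj, (hflin n j hj).map_smul, smul_eq_mul]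
      · rw [dif_neg hj, dif_neg hj, mul_zero]
  have FCont : ∀ n, @Continuous _ _ (τ n) _ (F n) := by
    intro n
    letI := τ n
    apply continuous_finset_sum
    intro j _
    by_cases hj : j ≤ n
    · simp only [dif_pos hj]
      exact hfcont n j hj
    · simp only [dif_neg hj]
      exact continuous_const
  have Fpos : ∀ n, ∀ x ∈ T n, 0 ≤ F n x := by
    intro n x hx
    apply Finset.sum_nonneg
    intro j hjm
    by_cases hj : j ≤ n
    · rw [dif_pos hj]; exact hfpos n j hj x hx
    · rw [dif_neg hj]
  -- positivity of F n on the interior of W j, pushed forward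
  have FposW : ∀ n j (hj : j ≤ n), ∀ u, u ∈ @interior _ (τ j) (W j) →
      0 < F n (Submodule.inclusion (hmono hj) u) := by
    intro n j hj u hu
    letI := τ j
    haveI := htag j
    haveI := hsmul j
    refine aux_pos (fun v : p j => F n (Submodule.inclusion (hmono hj) v)) ?_ (W j)
      ?_ ?_ u hu
    · constructor
      · intro a b; rw [map_add, (FLin n).map_add]
      · intro c a; rw [map_smul, (FLin n).map_smul]
    · intro x hx
      exact Fpos n _ (hWT n j hj x hx)
    · obtain ⟨w, hwW, hwpos⟩ := hfw n j hj
      refine ⟨w, hwW, ?_⟩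
      have hmem := hWT n j hj w hwW
      rw [hFdef]
      simp only
      apply Finset.sum_pos'
      · intro i him
        by_cases hi : i ≤ n
        · rw [dif_pos hi]; exact hfpos n i hi _ hmem
        · rw [dif_neg hi]
      · exact ⟨j, Finset.mem_range.mpr (Nat.lt_succ_of_le hj), by rw [dif_pos hj]; exact hwpos⟩
  -- the scalarized objectives on p 0
  set g : ℕ → p 0 → ℝ := fun n a =>
    F n (Submodule.inclusion (hmono (Nat.zero_le n)) a) with hgdef
  have gcont : ∀ n, @Continuous _ _ (τ 0) _ (g n) := by
    intro n
    letI := τ 0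
    letI := τ n
    exact (FCont n).comp (contE n 0 (Nat.zero_le n))
  -- minimizers
  have hmin : ∀ n, ∃ a ∈ A, ∀ b ∈ A, g n a ≤ g n b := by
    intro n
    letI := τ 0
    exact aux_min A hAne hcc (g n) (gcont n)
  choose bs hbsA hbsmin using hmin
  obtain ⟨a0, ha0A, hclus⟩ := hcc bs hbsA
  -- main claim: no point of A improves a0 with respect to any interior cone
  have main : ∀ j, ∀ b ∈ A,
      Submodule.inclusion (hmono (Nat.zero_le j)) b
        - Submodule.inclusion (hmono (Nat.zero_le j)) a0
        ∉ -(@interior _ (τ j) (W j)) := by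
    intro j b hbA hmem
    letI := τ j
    letI := τ 0
    haveI := htag j
    rw [Set.mem_neg, neg_sub] at hmem
    -- hmem : incl a0 - incl b ∈ interior (W j)
    have hUopen : IsOpen ((fun x : p j =>
        x - Submodule.inclusion (hmono (Nat.zero_le j)) b) ⁻¹' interior (W j)) :=
      isOpen_interior.preimage (continuous_id.sub continuous_const)
    have hUa : Submodule.inclusion (hmono (Nat.zero_le j)) a0 ∈
        ((fun x : p j => x - Submodule.inclusion (hmono (Nat.zero_le j)) b)
          ⁻¹' interior (W j)) := hmem
    have hclj : MapClusterPt (Submodule.inclusion (hmono (Nat.zero_le j)) a0) atTop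
        (fun k => Submodule.inclusion (hmono (Nat.zero_le j)) (bs k)) :=
      hclus.continuousAt_comp (contE j 0 (Nat.zero_le j)).continuousAt
    have hfreq := (mapClusterPt_iff_frequently.1 hclj) _ (hUopen.mem_nhds hUa)
    obtain ⟨k, hkj, hkU⟩ := (frequently_atTop.1 hfreq) j
    -- hkU : incl (bs k) - incl b ∈ interior (W j)
    have hpos := FposW k j hkj _ hkU
    have hcompat : Submodule.inclusion (hmono hkj)
        (Submodule.inclusion (hmono (Nat.zero_le j)) (bs k)
          - Submodule.inclusion (hmono (Nat.zero_le j)) b)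
        = Submodule.inclusion (hmono (Nat.zero_le k)) (bs k)
          - Submodule.inclusion (hmono (Nat.zero_le k)) b := by
      apply Subtype.ext
      simp
    rw [hcompat, (FLin k).map_sub] at hpos
    have hlt : g k b < g k (bs k) := by
      rw [hgdef]
      simp only
      linarith
    exact absurd (hbsmin k b hbA) (not_le.mpr hlt)
  -- conclusion
  refine ⟨a0, ha0A, fun n => ?_⟩
  letI := τ n
  haveI := htag n
  haveI := hsmul n
  obtain ⟨hcone, hadd⟩ := aux_cone (W n) (hWcone n) (hWconv n)
  refine ⟨interior (W n) ∪ {0}, hcone, hadd, ?_, ?_⟩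
  · exact (hdil n).trans (interior_maximal subset_union_left isOpen_interior)
  · ext x
    simp only [Set.mem_inter_iff, Set.mem_image, Set.mem_neg, Set.mem_singleton_iff]
    constructor
    · rintro ⟨⟨a, haA, rfl⟩, hneg⟩
      rcases hneg with hneg | hneg
      · exact absurd (Set.mem_neg.mpr hneg) (main n a haA)
      · rw [Set.mem_singleton_iff, neg_eq_zero] at hneg
        exact hneg
    · rintro rfl
      refine ⟨⟨a0, ha0A, sub_self _⟩, ?_⟩
      right
      simp
end
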